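/- arXiv:0809.2493 — 2 statements merged into one kernel-verified Lean document; each statement's English description precedes it below -/
import Mathlib

section
/- For every integer k > 3, the cycle C_k on k vertices has rainbow connection number exactly ⌈k/2⌉. -/
/-- A coloring `χ` of (potential) edges makes `G` rainbow connected if every pair of
vertices is joined by a path whose edges receive pairwise distinct colors. -/
def SimpleGraph.IsRainbowConnected {V C : Type*} (G : SimpleGraph V) (χ : Sym2 V → C) : Prop :=
  ∀ u v : V, ∃ p : G.Walk u v, p.IsPath ∧ (p.edges.map χ).Nodup

/-- The rainbow connection number: the least number of colors of a coloring
making `G` rainbow connected. -/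
noncomputable def SimpleGraph.rc {V : Type*} (G : SimpleGraph V) : ℕ :=
  sInf {k : ℕ | ∃ χ : Sym2 V → Fin k, G.IsRainbowConnected χ}

open SimpleGraph
open Fin.NatCast Fin.CommRing

namespace RCAux

variable {k : ℕ} [NeZero k]

lemma adj_succ (hk : 3 < k) (u : Fin k) : (cycleGraph k).Adj u (u + 1) := by
  rw [cycleGraph_adj']
  right
  have h1 : u + 1 - u = ((1:ℕ) : Fin k) := by push_cast; ring
  rw [h1, Fin.val_natCast]
  exact Nat.mod_eq_of_lt (by omega)

lemma cons_shift (u : Fin k) (n : ℕ) :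
    List.map (fun (i:ℕ) => u + (i:Fin k)) (List.range (n+1)) =
      u :: List.map (fun (i:ℕ) => (u + 1) + (i:Fin k)) (List.range n) := by
  rw [List.range_succ_eq_map]
  simp only [List.map_cons, List.map_map, Nat.cast_zero, add_zero]
  congr 1
  apply List.map_congr_left
  intro i _
  simp only [Function.comp_apply]
  push_cast
  ring

lemma cons_shift_e (u : Fin k) (n : ℕ) :
    List.map (fun (i:ℕ) => s(u + (i:Fin k), u + (i:Fin k) + 1)) (List.range (n+1)) =
      s(u, u + 1) :: List.map (fun (i:ℕ) => s((u+1) + (i:Fin k), (u+1) + (i:Fin k) + 1))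
        (List.range n) := by
  rw [List.range_succ_eq_map]
  simp only [List.map_cons, List.map_map, Nat.cast_zero, add_zero]
  congr 1
  apply List.map_congr_left
  intro i _
  simp only [Function.comp_apply]
  have h1 : u + ((Nat.succ i : ℕ) : Fin k) = (u + 1) + (i : Fin k) := by push_cast; ring
  rw [h1]

lemma arc_exists (hk : 3 < k) (u : Fin k) (n : ℕ) :
    ∃ p : (cycleGraph k).Walk u (u + (n : Fin k)), p.length = n ∧
      p.edges = (List.range n).map (fun (i:ℕ) => s(u + (i : Fin k), u + (i : Fin k) + 1)) ∧
      p.support = (List.range (n + 1)).map (fun (i:ℕ) => u + (i : Fin k)) := by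
  induction n generalizing u with
  | zero =>
    refine ⟨(SimpleGraph.Walk.nil :
        (cycleGraph k).Walk u u).copy rfl (by push_cast; ring), ?_, ?_, ?_⟩ <;>
      simp [List.range_succ]
  | succ n ih =>
    obtain ⟨p, hl, he, hs⟩ := ih (u + 1)
    have hcast : (u + 1) + (n : Fin k) = u + ((n + 1 : ℕ) : Fin k) := by push_cast; ring
    refine ⟨SimpleGraph.Walk.cons (adj_succ hk u) (p.copy rfl hcast), ?_, ?_, ?_⟩
    · simp [hl]
    · rw [SimpleGraph.Walk.edges_cons, SimpleGraph.Walk.edges_copy, he, cons_shift_e]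
    · rw [SimpleGraph.Walk.support_cons, SimpleGraph.Walk.support_copy, hs, cons_shift u (n+1), cons_shift (u+1) n]

end RCAux

namespace RCAux2

open RCAux

variable {k : ℕ} [NeZero k]

lemma modsmall (a b : ℕ) (h : a < 2*b) : a % b = a ∨ (b ≤ a ∧ a % b = a - b) := by
  rcases Nat.lt_or_ge a b with h'|h'
  · exact Or.inl (Nat.mod_eq_of_lt h')
  · exact Or.inr ⟨h', by rw [Nat.mod_eq_sub_mod h', Nat.mod_eq_of_lt (by omega)]⟩

lemma val_add_one' (hk : 3 < k) (x : Fin k) : (x + 1).val = (x.val + 1) % k := by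
  rw [Fin.add_def, ← Nat.cast_one (R := Fin k), Fin.val_natCast,
    Nat.mod_eq_of_lt (show 1 < k by omega)]

lemma no_two (hk : 3 < k) (x : Fin k) : x ≠ x + 1 + 1 := by
  intro h
  have h2 := congrArg Fin.val h
  rw [val_add_one' hk, val_add_one' hk] at h2
  have := x.is_lt
  have e1 := modsmall (x.val + 1) k (by omega)
  have e2 := modsmall ((x.val + 1) % k + 1) k
    (by have := Nat.mod_lt (x.val + 1) (show 0 < k by omega); omega)
  omega

lemma val_one_of (hk : 3 < k) {u w : Fin k} (h : (u - w).val = 1) : u = w + 1 := by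
  have h1 : u - w = ((1:ℕ) : Fin k) := by
    apply Fin.ext
    rw [h, Fin.val_natCast, Nat.mod_eq_of_lt (by omega)]
  have := sub_eq_iff_eq_add.mp h1
  rw [this]
  push_cast
  ring

lemma disp (hk : 3 < k) {u v : Fin k} (p : (SimpleGraph.cycleGraph k).Walk u v) :
    ∃ a b : ℕ, a + b = p.length ∧ u + (a : Fin k) = v + (b : Fin k) ∧
      (b = 0 → p.edges =
        (List.range a).map (fun (i:ℕ) => s(u + (i : Fin k), u + (i : Fin k) + 1))) := by
  induction p with
  | nil => exact ⟨0, 0, rfl, by push_cast; ring, fun _ => by simp⟩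
  | @cons x y z h q ih =>
    obtain ⟨a, b, hab, hsum, hedges⟩ := ih
    rw [SimpleGraph.cycleGraph_adj'] at h
    rcases h with h | h
    · -- x = y + 1 : backward step
      have hx : x = y + 1 := val_one_of hk h
      refine ⟨a, b + 1, by simp [SimpleGraph.Walk.length_cons]; omega, ?_, by omega⟩
      rw [hx, add_right_comm y 1, hsum]
      push_cast
      ring
    · -- y = x + 1 : forward step
      have hy : y = x + 1 := val_one_of hk h
      refine ⟨a + 1, b, by simp [SimpleGraph.Walk.length_cons]; omega, ?_, ?_⟩
      · rw [show x + ((a+1:ℕ) : Fin k) = y + (a : Fin k) by rw [hy]; push_cast; ring, hsum]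
      · intro hb
        rw [SimpleGraph.Walk.edges_cons, hedges hb, hy, cons_shift_e]


lemma upper (hk : 3 < k) :
    ∃ χ : Sym2 (Fin k) → Fin ((k+1)/2), (SimpleGraph.cycleGraph k).IsRainbowConnected χ := by
  haveI : NeZero ((k+1)/2) := ⟨by omega⟩
  set m := (k+1)/2 with hm
  have hsymm : ∀ a b : Fin k,
      (if b = a + 1 then ((a.val : Fin m)) else if a = b + 1 then (b.val : Fin m) else 0) =
      (if a = b + 1 then ((b.val : Fin m)) else if b = a + 1 then (a.val : Fin m) else 0) := by
    intro a b
    by_cases h1 : b = a + 1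
    · by_cases h2 : a = b + 1
      · exfalso; subst h1; exact no_two hk a h2
      · subst h1; simp [h2]
    · by_cases h2 : a = b + 1
      · subst h2; simp [h1]
      · simp [h1, h2]
  set χ : Sym2 (Fin k) → Fin m :=
    Sym2.lift ⟨fun a b => if b = a + 1 then ((a.val : Fin m))
      else if a = b + 1 then (b.val : Fin m) else 0, hsymm⟩ with hχdef
  have hχ : ∀ a : Fin k, χ s(a, a + 1) = ((a.val : Fin m)) := by
    intro a
    rw [hχdef, Sym2.lift_mk]
    change (if a + 1 = a + 1 then ((a.val : Fin m))
      else if a = (a + 1) + 1 then (((a+1).val : Fin m)) else 0) = _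
    rw [if_pos rfl]
  have hk2m : k ≤ 2 * m := by omega
  have arcgood : ∀ (u : Fin k) (n : ℕ), n ≤ k/2 →
      ∃ p : (SimpleGraph.cycleGraph k).Walk u (u + (n : Fin k)),
        p.IsPath ∧ (p.edges.map χ).Nodup := by
    intro u n hn
    obtain ⟨p, hl, he, hs⟩ := arc_exists hk u n
    refine ⟨p, ?_, ?_⟩
    · rw [SimpleGraph.Walk.isPath_def, hs]
      refine List.Nodup.map_on ?_ List.nodup_range
      intro i hi j hj hij
      simp only [List.mem_range] at hi hj
      have h2 := congrArg Fin.val (add_left_cancel hij)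
      rw [Fin.val_natCast, Fin.val_natCast,
        Nat.mod_eq_of_lt (by omega), Nat.mod_eq_of_lt (by omega)] at h2
      exact h2
    · rw [he, List.map_map]
      refine List.Nodup.map_on ?_ List.nodup_range
      intro i hi j hj hij
      simp only [List.mem_range] at hi hj
      simp only [Function.comp_apply] at hij
      rw [hχ, hχ] at hij
      have h2 := congrArg Fin.val hij
      rw [Fin.val_natCast, Fin.val_natCast] at h2
      have hvi : (u + (i : Fin k)).val = (u.val + i) % k := by
        rw [Fin.add_def]
        simp only [Fin.val_natCast]
        rw [Nat.mod_eq_of_lt (show i < k by omega)]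
      have hvj : (u + (j : Fin k)).val = (u.val + j) % k := by
        rw [Fin.add_def]
        simp only [Fin.val_natCast]
        rw [Nat.mod_eq_of_lt (show j < k by omega)]
      rw [hvi, hvj] at h2
      have hu := u.is_lt
      have e1 := modsmall (u.val + i) k (by omega)
      have e2 := modsmall (u.val + j) k (by omega)
      have e3 := modsmall ((u.val + i) % k) m (by
        have := Nat.mod_lt (u.val + i) (show 0 < k by omega); omega)
      have e4 := modsmall ((u.val + j) % k) m (by
        have := Nat.mod_lt (u.val + j) (show 0 < k by omega); omega)
      omega
  refine ⟨χ, fun u v => ?_⟩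
  have hvalsub : ∀ x y : Fin k, (x - y).val = (k - y.val + x.val) % k := by
    intro x y
    rw [Fin.sub_def]
  rcases le_or_gt ((v - u).val) (k/2) with hle | hgt
  · obtain ⟨p, hp, hnd⟩ := arcgood u ((v - u).val) hle
    have hcast : u + (((v - u).val : ℕ) : Fin k) = v := by
      rw [Fin.cast_val_eq_self]; ring
    refine ⟨p.copy rfl hcast, ?_, ?_⟩
    · simpa using hp
    · simpa using hnd
  · have h1 : (u - v).val ≤ k/2 := by
      have hx := hvalsub u v
      have hy := hvalsub v u
      have e1 := modsmall (k - v.val + u.val) k (by have := u.is_lt; have := v.is_lt; omega)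
      have e2 := modsmall (k - u.val + v.val) k (by have := u.is_lt; have := v.is_lt; omega)
      have := u.is_lt; have := v.is_lt
      omega
    obtain ⟨p, hp, hnd⟩ := arcgood v ((u - v).val) h1
    have hcast : v + (((u - v).val : ℕ) : Fin k) = u := by
      rw [Fin.cast_val_eq_self]; ring
    refine ⟨(p.copy rfl hcast).reverse, ?_, ?_⟩
    · apply SimpleGraph.Walk.IsPath.reverse
      rw [SimpleGraph.Walk.isPath_copy]
      exact hp
    · rw [SimpleGraph.Walk.edges_reverse, SimpleGraph.Walk.edges_copy]
      rw [List.map_reverse, List.nodup_reverse]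
      exact hnd


lemma lower (hk : 3 < k) (n : ℕ) (χ : Sym2 (Fin k) → Fin n)
    (h : (SimpleGraph.cycleGraph k).IsRainbowConnected χ) : (k+1)/2 ≤ n := by
  by_contra hcon
  push_neg at hcon
  set t := k/2 with ht
  have pairinfo : ∀ u : Fin k, ∃ a b : ℕ, a + b ≤ n ∧ a % k = (t + b) % k ∧
      (b = 0 → ∃ p : (SimpleGraph.cycleGraph k).Walk u (u + (t : Fin k)),
        p.edges = (List.range a).map (fun (i:ℕ) => s(u + (i:Fin k), u + (i:Fin k) + 1)) ∧
        (p.edges.map χ).Nodup) := by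
    intro u
    obtain ⟨p, hp, hnd⟩ := h u (u + (t : Fin k))
    obtain ⟨a, b, hab, hsum, hedges⟩ := disp hk p
    have hlen : p.length ≤ n := by
      have h2 := hnd.length_le_card
      rw [List.length_map, SimpleGraph.Walk.length_edges] at h2
      simpa using h2
    refine ⟨a, b, by omega, ?_, fun hb => ⟨p, hedges hb, hnd⟩⟩
    rw [add_assoc] at hsum
    have h2 := add_left_cancel hsum
    have h3 : ((a : ℕ) : Fin k) = (((t + b : ℕ)) : Fin k) := by
      rw [h2]; push_cast; ring
    have h4 := congrArg Fin.val h3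
    rwa [Fin.val_natCast, Fin.val_natCast] at h4
  rcases Nat.even_or_odd k with ⟨t2, hk2⟩ | ⟨t2, hk2⟩
  · -- even : k = t2 + t2
    obtain ⟨a, b, hab, hmod, -⟩ := pairinfo 0
    rw [Nat.mod_eq_of_lt (by omega), Nat.mod_eq_of_lt (by omega)] at hmod
    omega
  · -- odd : k = 2 * t2 + 1
    have htt : t = t2 := by omega
    have hn : n ≤ t := by omega
    -- window injectivity
    have W : ∀ u : Fin k, ∀ i j : ℕ, i < t → j < t →
        χ s(u + (i:Fin k), u + (i:Fin k) + 1) = χ s(u + (j:Fin k), u + (j:Fin k) + 1) →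
        i = j := by
      intro u i j hi hj hc
      obtain ⟨a, b, hab, hmod, hrest⟩ := pairinfo u
      rw [Nat.mod_eq_of_lt (by omega), Nat.mod_eq_of_lt (by omega)] at hmod
      have hb : b = 0 := by omega
      have ha : a = t := by omega
      subst hb; subst ha
      obtain ⟨p, hpe, hnd⟩ := hrest rfl
      rw [hpe, List.map_map] at hnd
      exact List.inj_on_of_nodup_map hnd (List.mem_range.mpr hi) (List.mem_range.mpr hj)
        (by simpa using hc)
    set c : Fin k → Fin n := fun x => χ s(x, x + 1) with hc
    have key : ∀ x z : Fin k, x ≠ z → c x = c z → t ≤ (z - x).val := by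
      intro x z hxz hcc
      by_contra hlt
      push_neg at hlt
      have hd0 : (z - x).val ≠ 0 := by
        intro h0
        apply hxz
        have hz : z - x = 0 := Fin.ext (by simpa using h0)
        exact (sub_eq_zero.mp hz).symm
      have e0 : x + ((0:ℕ) : Fin k) = x := by push_cast; ring
      have ed : x + ((((z - x).val : ℕ)) : Fin k) = z := by
        rw [Fin.cast_val_eq_self]; ring
      have := W x 0 ((z - x).val) (by omega) hlt (by rw [e0, ed]; exact hcc)
      omega
    -- pigeonhole : some colour on three edges
    have hcard : Fintype.card (Fin n) * 2 < Fintype.card (Fin k) := by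
      simp only [Fintype.card_fin]; omega
    obtain ⟨y, hy⟩ := Fintype.exists_lt_card_fiber_of_mul_lt_card c hcard
    obtain ⟨p1, p2, p3, h1, h2, h3, h12, h13, h23⟩ := Finset.two_lt_card_iff.mp hy
    simp only [Finset.mem_filter, Finset.mem_univ, true_and] at h1 h2 h3
    have k1 := key p1 p2 h12 (h1.trans h2.symm)
    have k2 := key p2 p1 h12.symm (h2.trans h1.symm)
    have k3 := key p2 p3 h23 (h2.trans h3.symm)
    have k4 := key p3 p2 h23.symm (h3.trans h2.symm)
    have k5 := key p1 p3 h13 (h1.trans h3.symm)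
    have k6 := key p3 p1 h13.symm (h3.trans h1.symm)
    have spair : ∀ x z : Fin k, ((z - x).val + (x - z).val) % k = 0 := by
      intro x z
      have e : (z - x) + (x - z) = (0 : Fin k) := by ring
      have h4 := congrArg Fin.val e
      rw [Fin.add_def] at h4
      simpa using h4
    have hsum13 : (p3 - p1).val = ((p3 - p2).val + (p2 - p1).val) % k := by
      have e : p3 - p1 = (p3 - p2) + (p2 - p1) := by ring
      rw [e, Fin.add_def]
    have s12 := spair p1 p2
    have s23 := spair p2 p3
    have s13 := spair p1 p3
    have b1 := (p2 - p1).is_lt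
    have b2 := (p1 - p2).is_lt
    have b3 := (p3 - p2).is_lt
    have b4 := (p2 - p3).is_lt
    have b5 := (p3 - p1).is_lt
    have b6 := (p1 - p3).is_lt
    have m1 := modsmall ((p2 - p1).val + (p1 - p2).val) k (by omega)
    have m2 := modsmall ((p3 - p2).val + (p2 - p3).val) k (by omega)
    have m3 := modsmall ((p3 - p1).val + (p1 - p3).val) k (by omega)
    have m4 := modsmall ((p3 - p2).val + (p2 - p1).val) k (by omega)
    omega

end RCAux2

theorem stmt_4 (k : ℕ) (hk : 3 < k) :
    (SimpleGraph.cycleGraph k).rc = ⌈(k : ℚ) / 2⌉ := by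
  haveI : NeZero k := ⟨by omega⟩
  have hrc : (SimpleGraph.cycleGraph k).rc = (k+1)/2 := by
    obtain ⟨χ, hχ⟩ := RCAux2.upper hk
    have hmem : (k+1)/2 ∈ {j : ℕ | ∃ χ : Sym2 (Fin k) → Fin j,
        (SimpleGraph.cycleGraph k).IsRainbowConnected χ} := ⟨χ, hχ⟩
    refine le_antisymm (Nat.sInf_le hmem) (le_csInf ⟨_, hmem⟩ ?_)
    rintro j ⟨χ', hχ'⟩
    exact RCAux2.lower hk j χ' hχ'
  rw [hrc]
  rcases Nat.even_or_odd k with ⟨t2, hk2⟩ | ⟨t2, hk2⟩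
  · have h3 : ((k:ℚ))/2 = ((t2:ℕ):ℚ) := by rw [hk2]; push_cast; ring
    rw [h3, Int.ceil_natCast]
    norm_cast
    omega
  · have h3 : ⌈((k:ℚ))/2⌉ = ((t2+1 : ℕ) : ℤ) := by
      rw [Int.ceil_eq_iff]
      rw [hk2]
      push_cast
      constructor <;> linarith
    rw [h3]
    norm_cast
    omega
end

section
/- Let G be a graph whose edge set is partitioned so that some subset of edges forms a connected subtree T meeting every part of a vertex partition V_1, …, V_k, the edges of T receive pairwise distinct fresh colors, and under the remaining coloring every pair of vertices inside a common part V_i is joined both by a rainbow path using only colors from a set {a_1,…,a_4} and by a rainbow path using only colors from a disjoint set {b_1,…,b_4}. Then G is rainbow connected under the combined coloring, and rc(G) ≤ |E(T)| + 8. -/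
/-- Lemma 3.4: if a connected subtree `T` of `G` meets every part of the vertex
partition (given by `Part : V → ι`), the edges of `T` get pairwise distinct fresh colors
(modeled as `Sum.inr e`, occurring only on `T`'s edges), and every pair of vertices in a
common part is joined by a rainbow path using only the `a`-colors `Sum.inl (Sum.inl _)`
and also by one using only the `b`-colors `Sum.inl (Sum.inr _)`, then the combined
coloring makes `G` rainbow connected; consequently `rc(G) ≤ |E(T)| + 8`. -/
theorem stmt_18 {V ι : Type*} [Fintype V] (G : SimpleGraph V)
    (Part : V → ι) (T : G.Subgraph) (hTconn : T.Connected) (hTtree : T.coe.IsAcyclic)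
    (hTmeets : ∀ i : ι, ∃ t ∈ T.verts, Part t = i)
    (χ : Sym2 V → (Fin 4 ⊕ Fin 4) ⊕ Sym2 V)
    (hfresh : ∀ e ∈ T.edgeSet, χ e = Sum.inr e)
    (hfresh' : ∀ e ∉ T.edgeSet, ∀ c : Sym2 V, χ e ≠ Sum.inr c)
    (ha : ∀ u v : V, Part u = Part v → ∃ p : G.Walk u v, p.IsPath ∧
        (∀ e ∈ p.edges, ∃ c : Fin 4, χ e = Sum.inl (Sum.inl c)) ∧ (p.edges.map χ).Nodup)
    (hb : ∀ u v : V, Part u = Part v → ∃ p : G.Walk u v, p.IsPath ∧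
        (∀ e ∈ p.edges, ∃ c : Fin 4, χ e = Sum.inl (Sum.inr c)) ∧ (p.edges.map χ).Nodup) :
    G.IsRainbowConnected χ ∧ G.rc ≤ T.edgeSet.ncard + 8 := by
  classical
  have hRC : G.IsRainbowConnected χ := by
    intro u v
    obtain ⟨tu, htu, hptu⟩ := hTmeets (Part u)
    obtain ⟨tv, htv, hptv⟩ := hTmeets (Part v)
    obtain ⟨pa, hpaP, hpaCol, hpaN⟩ := ha u tu hptu.symm
    obtain ⟨pb, hpbP, hpbCol, hpbN⟩ := hb tv v hptv
    obtain ⟨q0⟩ := hTconn ⟨tu, htu⟩ ⟨tv, htv⟩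
    set q : G.Walk tu tv := (q0.bypass.map T.hom) with hq
    have hqE : ∀ e ∈ q.edges, e ∈ T.edgeSet := by
      intro e he
      rw [hq] at he
      erw [SimpleGraph.Walk.edges_map] at he
      obtain ⟨e', he', rfl⟩ := List.mem_map.mp he
      have := q0.bypass.edges_subset_edgeSet he'
      rw [SimpleGraph.Subgraph.edgeSet_coe] at this
      exact this
    have hqN : q.edges.Nodup := by
      rw [hq]
      erw [SimpleGraph.Walk.edges_map]
      exact (q0.bypass_isPath.edges_nodup).map (Sym2.map.injective Subtype.val_injective)
    set w : G.Walk u v := pa.append (q.append pb) with hw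
    have hwE : w.edges = pa.edges ++ (q.edges ++ pb.edges) := by
      rw [hw, SimpleGraph.Walk.edges_append, SimpleGraph.Walk.edges_append]
    have hqcolN : (q.edges.map χ).Nodup := by
      have : q.edges.map χ = q.edges.map Sum.inr :=
        List.map_congr_left fun e he => hfresh e (hqE e he)
      rw [this]
      exact hqN.map Sum.inr_injective
    have hwN : (w.edges.map χ).Nodup := by
      rw [hwE]
      simp only [List.map_append]
      rw [List.nodup_append, List.nodup_append]
      refine ⟨hpaN, ⟨hqcolN, hpbN, ?_⟩, ?_⟩
      · rintro x hx _ hy rfl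
        obtain ⟨e, he, rfl⟩ := List.mem_map.mp hx
        obtain ⟨f, hf, hfy⟩ := List.mem_map.mp hy
        obtain ⟨c, hc⟩ := hpbCol f hf
        rw [hfresh e (hqE e he), hc] at hfy
        simp at hfy
      · rintro x hx _ hy rfl
        obtain ⟨e, he, rfl⟩ := List.mem_map.mp hx
        obtain ⟨c, hc⟩ := hpaCol e he
        rcases List.mem_append.mp hy with h | h
        · obtain ⟨f, hf, hfy⟩ := List.mem_map.mp h
          rw [hfresh f (hqE f hf), hc] at hfy
          simp at hfy
        · obtain ⟨f, hf, hfy⟩ := List.mem_map.mp h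
          obtain ⟨d, hd⟩ := hpbCol f hf
          rw [hd, hc] at hfy
          simp at hfy
    refine ⟨w.bypass, w.bypass_isPath, ?_⟩
    refine List.Nodup.map_on ?_ w.bypass_isPath.edges_nodup
    intro x hx y hy hxy
    exact List.inj_on_of_nodup_map hwN (w.edges_bypass_subset hx)
      (w.edges_bypass_subset hy) hxy
  refine ⟨hRC, ?_⟩
  -- rc bound
  set n := T.edgeSet.ncard with hn
  set S : Set ((Fin 4 ⊕ Fin 4) ⊕ Sym2 V) := Set.range Sum.inl ∪ Sum.inr '' T.edgeSet with hS
  have hmem : ∀ e : Sym2 V, χ e ∈ S := by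
    intro e
    rcases h : χ e with x | c
    · exact Or.inl ⟨x, rfl⟩
    · by_cases he : e ∈ T.edgeSet
      · have h2 := hfresh e he; rw [h] at h2
        obtain rfl : c = e := Sum.inr_injective h2
        exact Or.inr ⟨c, he, rfl⟩
      · exact absurd h (hfresh' e he c)
  have hcard : Nat.card S ≤ n + 8 := by
    rw [Nat.card_coe_set_eq]
    calc S.ncard ≤ (Set.range (Sum.inl : (Fin 4 ⊕ Fin 4) → _)).ncard
          + (Sum.inr '' T.edgeSet).ncard := Set.ncard_union_le _ _
      _ = 8 + n := by
          rw [Set.ncard_image_of_injective _ Sum.inr_injective,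
            ← Nat.card_coe_set_eq, Nat.card_range_of_injective Sum.inl_injective]
          simp [hn]
      _ = n + 8 := by omega
  have hfinS : Fintype S := Fintype.ofFinite _
  obtain ⟨emb⟩ : Nonempty (S ↪ Fin (n + 8)) := by
    apply Function.Embedding.nonempty_of_card_le
    rwa [Fintype.card_fin, ← Nat.card_eq_fintype_card]
  have : (n + 8) ∈ {k : ℕ | ∃ χ : Sym2 V → Fin k, G.IsRainbowConnected χ} := by
    refine ⟨fun e => emb ⟨χ e, hmem e⟩, ?_⟩
    intro u v
    obtain ⟨p, hp, hpN⟩ := hRC u v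
    refine ⟨p, hp, ?_⟩
    refine List.Nodup.map_on ?_ hp.edges_nodup
    intro x hx y hy hxy
    have : χ x = χ y := congrArg Subtype.val (emb.injective hxy)
    exact List.inj_on_of_nodup_map hpN hx hy this
  exact Nat.sInf_le this
end
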